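/- The identity of formal power series P̃(t)·Ẽ(t) = (1 - y₀t)^{n-2} · [P·E](t/(1 - y₀t)) holds, where P̃(t) = d/dt log C(t/(1-y₀t)), Ẽ(t) = Π_{i=1}^n (1+(y_i-y₀)t), P(t) = d/dt log C(t), and E(t) = Π_{i=1}^n (1+y_it). -/

import Mathlib

/-- Substitution of a power series `g` with zero constant term into `F`. -/
noncomputable def substS {R : Type*} [CommRing R] (g F : PowerSeries R) : PowerSeries R :=
  PowerSeries.mk fun n =>
    ∑ k ∈ Finset.range (n + 1), PowerSeries.coeff k F * PowerSeries.coeff n (g ^ k)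

namespace SubstAux

open PowerSeries Finset

variable {R : Type*} [CommRing R] (g : PowerSeries R)

lemma coeff_derivativeFun' (f : PowerSeries R) (n : ℕ) :
    coeff n f.derivativeFun = coeff (n + 1) f * (n + 1) :=
  PowerSeries.coeff_derivative f n

lemma derivativeFun_C' (r : R) : (C r : PowerSeries R).derivativeFun = 0 :=
  PowerSeries.derivative_C

lemma coeff_substS (F : PowerSeries R) (n : ℕ) :
    coeff n (substS g F) =
      ∑ k ∈ Finset.range (n + 1), coeff k F * coeff n (g ^ k) := by
  simp [substS]

lemma substS_add (A B : PowerSeries R) : substS g (A + B) = substS g A + substS g B := by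
  ext n
  simp [coeff_substS, add_mul, Finset.sum_add_distrib]

lemma substS_sum {ι : Type*} (s : Finset ι) (f : ι → PowerSeries R) :
    substS g (∑ i ∈ s, f i) = ∑ i ∈ s, substS g (f i) :=
  map_sum (AddMonoidHom.mk' (substS g) (substS_add g)) f s

lemma coeff_pow_g (hg : constantCoeff g = 0) {m k : ℕ} (h : m < k) :
    coeff m (g ^ k) = 0 := by
  have h1 : (X : PowerSeries R) ∣ g := X_dvd_iff.mpr hg
  have h2 : (X : PowerSeries R) ^ k ∣ g ^ k := pow_dvd_pow_of_dvd h1 k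
  exact (X_pow_dvd_iff.mp h2) m h

lemma substS_monomial (hg : constantCoeff g = 0) (r : R) (m : ℕ) :
    substS g (C r * X ^ m) = C r * g ^ m := by
  ext n
  rw [coeff_substS, coeff_C_mul]
  have h : ∀ k ∈ range (n + 1),
      coeff k (C r * X ^ m) * coeff n (g ^ k)
        = if k = m then r * coeff n (g ^ m) else 0 := by
    intro k _
    rw [coeff_C_mul, coeff_X_pow]
    split_ifs with h
    · subst h; ring
    · simp
  rw [Finset.sum_congr rfl h, Finset.sum_ite_eq' (range (n + 1)) m]
  split_ifs with h
  · rfl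
  · rw [coeff_pow_g g hg (by simpa using h), mul_zero]

lemma substS_one (hg : constantCoeff g = 0) : substS g (1 : PowerSeries R) = 1 := by
  simpa using substS_monomial g hg 1 0

lemma coeff_substS_congr {A B : PowerSeries R} (n : ℕ)
    (h : ∀ k ≤ n, coeff k A = coeff k B) :
    coeff n (substS g A) = coeff n (substS g B) := by
  rw [coeff_substS, coeff_substS]
  exact Finset.sum_congr rfl fun k hk => by
    rw [h k (Nat.lt_succ_iff.mp (Finset.mem_range.mp hk))]

lemma coeff_mul_congr {A A' B B' : PowerSeries R} (n : ℕ)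
    (hA : ∀ k ≤ n, coeff k A = coeff k A')
    (hB : ∀ k ≤ n, coeff k B = coeff k B') :
    coeff n (A * B) = coeff n (A' * B') := by
  rw [coeff_mul, coeff_mul]
  refine Finset.sum_congr rfl fun p hp => ?_
  rw [Finset.HasAntidiagonal.mem_antidiagonal] at hp
  rw [hA p.1 (by omega), hB p.2 (by omega)]

/-- coefficients of the truncation polynomial -/
lemma coeff_tp (F : PowerSeries R) (N k : ℕ) :
    coeff k (∑ i ∈ range N, C (coeff i F) * X ^ i)
      = if k < N then coeff k F else 0 := by
  rw [map_sum]
  have h : ∀ i ∈ range N,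
      coeff k (C (coeff i F) * X ^ i)
        = if i = k then coeff k F else 0 := by
    intro i _
    rw [coeff_C_mul, coeff_X_pow]
    split_ifs with h1 h2 h2
    · rw [h2]; ring
    · exact absurd h1.symm h2
    · exact absurd h2.symm h1
    · ring
  rw [Finset.sum_congr rfl h, Finset.sum_ite_eq' (range N) k]
  simp [Finset.mem_range]

lemma substS_mul (hg : constantCoeff g = 0) (A B : PowerSeries R) :
    substS g (A * B) = substS g A * substS g B := by
  ext n
  set A' := ∑ i ∈ range (n + 1), C (coeff i A) * X ^ i with hA'
  set B' := ∑ i ∈ range (n + 1), C (coeff i B) * X ^ i with hB'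
  have hAc : ∀ k ≤ n, coeff k A = coeff k A' := by
    intro k hk; rw [hA', coeff_tp, if_pos (by omega)]
  have hBc : ∀ k ≤ n, coeff k B = coeff k B' := by
    intro k hk; rw [hB', coeff_tp, if_pos (by omega)]
  have heA : substS g A' = ∑ i ∈ range (n + 1), C (coeff i A) * g ^ i := by
    rw [hA', substS_sum]
    exact Finset.sum_congr rfl fun i _ => substS_monomial g hg _ _
  have heB : substS g B' = ∑ i ∈ range (n + 1), C (coeff i B) * g ^ i := by
    rw [hB', substS_sum]
    exact Finset.sum_congr rfl fun i _ => substS_monomial g hg _ _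
  have expand : A' * B' = ∑ i ∈ range (n + 1), ∑ j ∈ range (n + 1),
      C (coeff i A * coeff j B) * X ^ (i + j) := by
    rw [hA', hB', Finset.sum_mul_sum]
    refine Finset.sum_congr rfl fun i _ => Finset.sum_congr rfl fun j _ => ?_
    rw [map_mul, pow_add]; ring
  have key : substS g (A' * B') = substS g A' * substS g B' := by
    rw [expand, substS_sum, heA, heB, Finset.sum_mul_sum]
    refine Finset.sum_congr rfl fun i _ => ?_
    rw [substS_sum]
    refine Finset.sum_congr rfl fun j _ => ?_
    rw [substS_monomial g hg, map_mul, pow_add]; ring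
  calc coeff n (substS g (A * B))
      = coeff n (substS g (A' * B')) :=
        coeff_substS_congr g n fun k hk =>
          coeff_mul_congr k (fun j hj => hAc j (le_trans hj hk))
            (fun j hj => hBc j (le_trans hj hk))
    _ = coeff n (substS g A' * substS g B') := by rw [key]
    _ = coeff n (substS g A * substS g B) :=
        (coeff_mul_congr n
          (fun k hk => coeff_substS_congr g k fun j hj => hAc j (le_trans hj hk))
          (fun k hk => coeff_substS_congr g k fun j hj => hBc j (le_trans hj hk))).symm

lemma derivativeFun_X : (X : PowerSeries R).derivativeFun = 1 := by
  ext m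
  simp [coeff_derivativeFun', coeff_X, coeff_one]
  rcases m with _ | m <;> simp

lemma derivativeFun_sum {ι : Type*} (s : Finset ι) (f : ι → PowerSeries R) :
    (∑ i ∈ s, f i).derivativeFun = ∑ i ∈ s, (f i).derivativeFun :=
  map_sum (AddMonoidHom.mk' PowerSeries.derivativeFun
    (fun a b => PowerSeries.derivativeFun_add a b)) f s

lemma derivativeFun_pow (f : PowerSeries R) (m : ℕ) :
    (f ^ (m + 1)).derivativeFun = ((m : PowerSeries R) + 1) * (f ^ m * f.derivativeFun) := by
  induction m with
  | zero => simp
  | succ m ih =>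
    rw [pow_succ, PowerSeries.derivativeFun_mul, ih]
    simp only [smul_eq_mul]
    push_cast
    ring

noncomputable def substSHom (hg : constantCoeff g = 0) :
    PowerSeries R →+* PowerSeries R where
  toFun := substS g
  map_one' := substS_one g hg
  map_mul' := substS_mul g hg
  map_zero' := by simpa using substS_monomial g hg 0 0
  map_add' := substS_add g

lemma substS_prod {ι : Type*} (hg : constantCoeff g = 0) (s : Finset ι)
    (f : ι → PowerSeries R) :
    substS g (∏ i ∈ s, f i) = ∏ i ∈ s, substS g (f i) :=
  map_prod (substSHom g hg) f s

lemma substS_deriv (hg : constantCoeff g = 0) (F : PowerSeries R) :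
    (substS g F).derivativeFun = substS g F.derivativeFun * g.derivativeFun := by
  -- first, the polynomial (finite-sum) case
  have key : ∀ (c : ℕ → R) (N : ℕ),
      (substS g (∑ k ∈ range N, C (c k) * X ^ k)).derivativeFun
        = substS g (∑ k ∈ range N, C (c k) * X ^ k).derivativeFun * g.derivativeFun := by
    intro c N
    rw [substS_sum, derivativeFun_sum, derivativeFun_sum, substS_sum, Finset.sum_mul]
    refine Finset.sum_congr rfl fun k _ => ?_
    have hz : substS g (0 : PowerSeries R) = 0 := by
      simpa using substS_monomial g hg 0 0
    rcases k with _ | m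
    · simp only [pow_zero, mul_one]
      rw [show substS g (C (c 0)) = C (c 0) by
            simpa using substS_monomial g hg (c 0) 0,
        derivativeFun_C', hz, zero_mul]
    · have hc : ((m : PowerSeries R) + 1) = C ((m : R) + 1) := by
        push_cast
        simp [map_natCast]
      rw [substS_monomial g hg, PowerSeries.derivativeFun_mul,
        PowerSeries.derivativeFun_mul, derivativeFun_C',
        derivativeFun_pow, derivativeFun_pow]
      simp only [smul_eq_mul, zero_mul, mul_zero, zero_add, add_zero]
      rw [derivativeFun_X, mul_one, hc,
        show C (c (m + 1)) * (C ((m : R) + 1) * X ^ m)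
            = C (c (m + 1) * ((m : R) + 1)) * X ^ m by rw [map_mul]; ring,
        substS_monomial g hg, map_mul]
      ring
  ext n
  set F' := ∑ k ∈ range (n + 2), C (coeff k F) * X ^ k with hF'
  have hco : ∀ k ≤ n + 1, coeff k F' = coeff k F := by
    intro k hk; rw [hF', coeff_tp, if_pos (by omega)]
  have hL : coeff n (substS g F).derivativeFun
      = coeff n (substS g F').derivativeFun := by
    rw [coeff_derivativeFun', coeff_derivativeFun',
      coeff_substS_congr g (n + 1) fun k hk => (hco k hk).symm]
  have hco' : ∀ k ≤ n, coeff k F'.derivativeFun = coeff k F.derivativeFun := by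
    intro k hk
    rw [coeff_derivativeFun', coeff_derivativeFun',
      hco (k + 1) (by omega)]
  have hR : coeff n (substS g F.derivativeFun * g.derivativeFun)
      = coeff n (substS g F'.derivativeFun * g.derivativeFun) :=
    coeff_mul_congr n
      (fun k hk => coeff_substS_congr g k fun j hj => (hco' j (le_trans hj hk)).symm)
      (fun k _ => rfl)
  rw [hL, hR, key (fun k => coeff k F) (n + 2)]

end SubstAux

/-- The ring `Λ[y₁,…,yₙ]`: `X (inl k)` is `c_k` (`k ≥ 1`), `X (inr i)` is `y_{i+1}`. -/
abbrev Lam (n : ℕ) := MvPolynomial (ℕ ⊕ Fin n) ℤ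

noncomputable def cL (n : ℕ) : ℕ → Lam n :=
  fun k => if k = 0 then 1 else MvPolynomial.X (.inl k)

noncomputable def yL (n : ℕ) : Fin n → Lam n := fun i => MvPolynomial.X (.inr i)

/-- `y₀ = yₙ`. -/
noncomputable def y0L (n : ℕ) : Lam n :=
  if h : 0 < n then yL n ⟨n - 1, Nat.sub_lt h one_pos⟩ else 0

/-- `C(t) = Σ c_k t^k`. -/
noncomputable def CL (n : ℕ) : PowerSeries (Lam n) := PowerSeries.mk (cL n)

/-- `t/(1 - y₀t)`. -/
noncomputable def gL (n : ℕ) : PowerSeries (Lam n) :=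
  PowerSeries.mk fun m => if m = 0 then 0 else y0L n ^ (m - 1)

/-- `H(t) = C(t/(1-y₀t))`. -/
noncomputable def HL (n : ℕ) : PowerSeries (Lam n) := substS (gL n) (CL n)

/-- `E(t) = Π_{i=1}^n (1 + y_i t)`. -/
noncomputable def EL (n : ℕ) : PowerSeries (Lam n) :=
  ∏ i : Fin n, (1 + PowerSeries.C (yL n i) * PowerSeries.X)

/-- `Ẽ(t) = Π_{i=1}^n (1 + (y_i - y₀) t)`. -/
noncomputable def EtL (n : ℕ) : PowerSeries (Lam n) :=
  ∏ i : Fin n, (1 + PowerSeries.C (yL n i - y0L n) * PowerSeries.X)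

open PowerSeries SubstAux

/-- The power series identity `P̃(t)·Ẽ(t) = (1-y₀t)^{n-2} · [P·E](t/(1-y₀t))`, where the
(possibly negative) power of the unit `1 - y₀t` is taken in the unit group. -/
theorem stmt9 (n : ℕ) (hn : 0 < n) (p pt : ℕ → Lam n)
    (hp : (PowerSeries.mk fun j => p (j + 1)) * CL n = (CL n).derivativeFun)
    (hpt : (PowerSeries.mk fun j => pt (j + 1)) * HL n = (HL n).derivativeFun)
    (u : (PowerSeries (Lam n))ˣ)
    (hu : (u : PowerSeries (Lam n)) = 1 - PowerSeries.C (y0L n) * PowerSeries.X) :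
    (PowerSeries.mk fun j => pt (j + 1)) * EtL n =
      (↑(u ^ ((n : ℤ) - 2)) : PowerSeries (Lam n)) *
        substS (gL n) ((PowerSeries.mk fun j => p (j + 1)) * EL n) := by
  have hg : constantCoeff (gL n) = 0 := by
    rw [gL, PowerSeries.constantCoeff_mk]; simp
  set U : PowerSeries (Lam n) := (u : PowerSeries (Lam n)) with hUdef
  have hUg : U * gL n = X := by
    rw [hu, sub_mul, one_mul]
    ext m
    rw [map_sub]
    rcases m with _ | m
    · simp [gL, coeff_mk, mul_assoc, coeff_C_mul]
    · rw [mul_assoc, coeff_C_mul, coeff_succ_X_mul, gL, coeff_mk, coeff_mk]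
      rcases m with _ | m
      · simp
      · simp [pow_succ, mul_comm, coeff_X]
  have hdU : U.derivativeFun = -(PowerSeries.C (y0L n)) := by
    rw [hu]
    ext m
    rw [coeff_derivativeFun', map_sub, map_neg]
    rcases m with _ | m <;>
      simp [coeff_one, coeff_C_mul, PowerSeries.coeff_X, coeff_C]
  have hg2 : U * U * (gL n).derivativeFun = 1 := by
    have h1 : (U * gL n).derivativeFun = 1 := by rw [hUg]; exact derivativeFun_X
    rw [PowerSeries.derivativeFun_mul, hdU, smul_eq_mul, smul_eq_mul] at h1
    linear_combination U * h1 + PowerSeries.C (y0L n) * hUg + hu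
  have hmon1 : ∀ r : Lam n, substS (gL n) (1 + PowerSeries.C r * X)
      = 1 + PowerSeries.C r * gL n := by
    intro r
    rw [substS_add, substS_one _ hg]
    congr 1
    simpa using substS_monomial (gL n) hg r 1
  have hUE : U ^ n * substS (gL n) (EL n) = EtL n := by
    rw [EL, substS_prod _ hg, EtL,
      show (U ^ n : PowerSeries (Lam n)) = ∏ _i : Fin n, U by
        rw [Finset.prod_const, Finset.card_univ, Fintype.card_fin],
      ← Finset.prod_mul_distrib]
    refine Finset.prod_congr rfl fun i _ => ?_
    rw [hmon1, map_sub]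
    linear_combination PowerSeries.C (yL n i) * hUg + hu
  have hH' : (HL n).derivativeFun
      = substS (gL n) (CL n).derivativeFun * (gL n).derivativeFun :=
    substS_deriv (gL n) hg (CL n)
  have hH0 : (PowerSeries.coeff 0) (HL n) = 1 := by
    rw [show HL n = substS (gL n) (CL n) from rfl, coeff_substS]
    simp [CL, cL]
  have hHne : HL n ≠ 0 := fun h => by simp [h] at hH0
  have hcan : U * U * HL n ≠ 0 :=
    mul_ne_zero (mul_ne_zero (Units.ne_zero u) (Units.ne_zero u)) hHne
  have hun : (↑(u ^ ((n : ℤ) - 2)) : PowerSeries (Lam n)) * (U * U) = U ^ n := by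
    have h2 : U * U
        = ((u ^ (2 : ℤ) : (PowerSeries (Lam n))ˣ) : PowerSeries (Lam n)) := by
      rw [zpow_two, Units.val_mul]
    rw [h2, ← Units.val_mul, ← zpow_add, show (n : ℤ) - 2 + 2 = (n : ℤ) by ring,
      zpow_natCast, Units.val_pow_eq_pow_val]
  apply mul_right_cancel₀ hcan
  set Pt : PowerSeries (Lam n) := PowerSeries.mk fun j => pt (j + 1) with hPt
  set P : PowerSeries (Lam n) := PowerSeries.mk fun j => p (j + 1) with hP
  set Cd := (CL n).derivativeFun with hCd
  calc Pt * EtL n * (U * U * HL n)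
      = (Pt * HL n) * EtL n * (U * U) := by ring
    _ = (substS (gL n) Cd * (gL n).derivativeFun) * EtL n * (U * U) := by
        rw [hpt, hH']
    _ = substS (gL n) Cd * EtL n * (U * U * (gL n).derivativeFun) := by ring
    _ = substS (gL n) Cd * EtL n := by rw [hg2, mul_one]
    _ = substS (gL n) Cd * (U ^ n * substS (gL n) (EL n)) := by rw [hUE]
    _ = U ^ n * (substS (gL n) Cd * substS (gL n) (EL n)) := by ring
    _ = U ^ n * substS (gL n) (Cd * EL n) := by rw [substS_mul _ hg]
    _ = U ^ n * substS (gL n) (P * CL n * EL n) := by rw [← hp]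
    _ = U ^ n * substS (gL n) ((P * EL n) * CL n) := by
        rw [show P * CL n * EL n = (P * EL n) * CL n from by ring]
    _ = U ^ n * (substS (gL n) (P * EL n) * substS (gL n) (CL n)) := by
        rw [substS_mul _ hg]
    _ = (↑(u ^ ((n : ℤ) - 2)) * (U * U)) * (substS (gL n) (P * EL n) * HL n) := by
        rw [hun]; rfl
    _ = ↑(u ^ ((n : ℤ) - 2)) * substS (gL n) (P * EL n) * (U * U * HL n) := by ring
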